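/- Let a, b, c, d be homogeneous polynomials in ℂ[x₀,x₁,x₂] of degrees 1, 2, 3, 2 respectively, with a ≠ 0 and c ≠ 0, satisfying a·c = b² − d². Then c is not irreducible; more precisely, there exists a nonzero homogeneous polynomial l of degree 1 dividing c. -/

import Mathlib

open MvPolynomial


/-- Cofactor of a homogeneous factor of a homogeneous polynomial is homogeneous. -/
lemma aux_quot_homog {p q : MvPolynomial (Fin 3) ℂ} {m n : ℕ}
    (hp : p.IsHomogeneous m) (hpq : (p * q).IsHomogeneous (m + n)) (hp0 : p ≠ 0) :
    q.IsHomogeneous n := by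
  have key : ∀ j, j ≠ n → homogeneousComponent j q = 0 := by
    intro j hj
    have h1 : p * homogeneousComponent j q = 0 := by
      have e1 : (homogeneousComponent (m + j)) (p * q) = 0 := by
        rw [homogeneousComponent_of_mem ((mem_homogeneousSubmodule _ _).2 hpq)]
        rw [if_neg (by omega)]
      have e2 : (homogeneousComponent (m + j)) (p * q) = p * homogeneousComponent j q := by
        conv_lhs => rw [← sum_homogeneousComponent q, Finset.mul_sum, map_sum]
        by_cases hjr : j ∈ Finset.range (q.totalDegree + 1)
        · rw [Finset.sum_eq_single_of_mem j hjr]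
          · rw [homogeneousComponent_of_mem ((mem_homogeneousSubmodule _ _).2
              (hp.mul (homogeneousComponent_isHomogeneous j q))), if_pos rfl]
          · intro i _ hij
            rw [homogeneousComponent_of_mem ((mem_homogeneousSubmodule _ _).2
              (hp.mul (homogeneousComponent_isHomogeneous i q))), if_neg (by omega)]
        · have hz : homogeneousComponent j q = 0 :=
            homogeneousComponent_eq_zero _ _ (by simp only [Finset.mem_range] at hjr; omega)
          rw [hz, mul_zero]
          apply Finset.sum_eq_zero
          intro i hi
          simp only [Finset.mem_range] at hjr hi
          rw [homogeneousComponent_of_mem ((mem_homogeneousSubmodule _ _).2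
            (hp.mul (homogeneousComponent_isHomogeneous i q))), if_neg (by omega)]
      rw [← e2, e1]
    rcases mul_eq_zero.1 h1 with h | h
    · exact absurd h hp0
    · exact h
  have hq : q = ∑ i ∈ Finset.range (q.totalDegree + 1), homogeneousComponent i q :=
    (sum_homogeneousComponent q).symm
  rw [hq]
  apply IsHomogeneous.sum
  intro i _
  by_cases hi : i = n
  · subst hi; exact homogeneousComponent_isHomogeneous i q
  · rw [key i hi]; exact isHomogeneous_zero _ _ _

lemma aux_not_unit {p : MvPolynomial (Fin 3) ℂ} {n : ℕ}
    (hp : p.IsHomogeneous n) (hn : n ≠ 0) : ¬ IsUnit p := by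
  intro h
  have h0 : constantCoeff p = 0 := by
    have := hp.coeff_eq_zero (d := 0) (by simpa [map_zero] using (Ne.symm hn))
    simpa [constantCoeff_eq] using this
  have := h.map constantCoeff
  rw [h0] at this
  exact this.ne_zero rfl

lemma aux_prime_X (i : Fin 3) : Prime (X i : MvPolynomial (Fin 3) ℂ) := by
  have h0 : Prime (X 0 : MvPolynomial (Fin 3) ℂ) := by
    rw [← MulEquiv.prime_iff (finSuccEquiv ℂ 2).toMulEquiv]
    have : (finSuccEquiv ℂ 2).toMulEquiv (X 0) = Polynomial.X := finSuccEquiv_X_zero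
    rw [this]
    exact Polynomial.prime_X
  have h := MulEquiv.prime_iff (renameEquiv ℂ (Equiv.swap (0 : Fin 3) i)).toMulEquiv
    (p := (X 0 : MvPolynomial (Fin 3) ℂ))
  have e : (renameEquiv ℂ (Equiv.swap (0 : Fin 3) i)).toMulEquiv (X 0) = X i := by
    show (renameEquiv ℂ (Equiv.swap (0 : Fin 3) i)) (X 0) = X i
    simp [renameEquiv_apply, rename_X, Equiv.swap_apply_left]
  rw [e] at h
  exact h.mpr h0

lemma aux_single_of_degree_one (d : Fin 3 →₀ ℕ) (h : Finsupp.degree d = 1) :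
    ∃ j, d = Finsupp.single j 1 := by
  have hdeg : Finsupp.degree d = d 0 + d 1 + d 2 := by
    rw [Finsupp.degree_apply,
      Finset.sum_subset (Finset.subset_univ _)
        (fun x _ hx => Finsupp.notMem_support_iff.mp hx)]
    simp [Fin.sum_univ_three]
  rw [hdeg] at h
  by_cases h0 : d 0 = 1
  · refine ⟨0, ?_⟩
    ext k; fin_cases k <;> simp [Finsupp.single_apply] <;> omega
  · by_cases h1 : d 1 = 1
    · refine ⟨1, ?_⟩
      ext k; fin_cases k <;> simp [Finsupp.single_apply] <;> omega
    · refine ⟨2, ?_⟩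
      ext k; fin_cases k <;> simp [Finsupp.single_apply] <;> omega

lemma aux_lin_prime {p : MvPolynomial (Fin 3) ℂ}
    (hp : p.IsHomogeneous 1) (hp0 : p ≠ 0) : Prime p := by
  classical
  set cf : Fin 3 → ℂ := fun j => coeff (Finsupp.single j 1) p with hcf
  have hrep : p = ∑ j : Fin 3, C (cf j) * X j := by
    ext d
    rw [coeff_sum]
    simp only [coeff_C_mul, coeff_X']
    by_cases hd : ∃ j : Fin 3, d = Finsupp.single j 1
    · obtain ⟨j, rfl⟩ := hd
      rw [Finset.sum_eq_single_of_mem j (Finset.mem_univ j)]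
      · simp [hcf]
      · intro k _ hkj
        rw [if_neg (fun hs => hkj ((Finsupp.single_left_inj one_ne_zero).mp hs)), mul_zero]
    · have hzero : coeff d p = 0 := by
        by_contra hcd
        exact hd (aux_single_of_degree_one d (by rw [Finsupp.degree_eq_weight_one]; exact hp hcd))
      rw [hzero]
      refine (Finset.sum_eq_zero ?_).symm
      intro j _
      rw [if_neg (fun hs => hd ⟨j, hs.symm⟩), mul_zero]
  obtain ⟨i, hci⟩ : ∃ i, cf i ≠ 0 := by
    by_contra hall
    push_neg at hall
    exact hp0 (by rw [hrep]; simp [hall])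
  set s : MvPolynomial (Fin 3) ℂ := ∑ j ∈ Finset.univ.erase i, C (cf j) * X j with hsdef
  have hps : p = C (cf i) * X i + s := by
    rw [hrep, ← Finset.add_sum_erase _ _ (Finset.mem_univ i)]
  set f : Fin 3 → MvPolynomial (Fin 3) ℂ :=
    Function.update (fun j => (X j : MvPolynomial (Fin 3) ℂ)) i (C (cf i)⁻¹ * (X i - s))
    with hfdef
  set g : Fin 3 → MvPolynomial (Fin 3) ℂ :=
    Function.update (fun j => (X j : MvPolynomial (Fin 3) ℂ)) i p with hgdef
  have hfi : f i = C (cf i)⁻¹ * (X i - s) := Function.update_self _ _ _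
  have hfj : ∀ j, j ≠ i → f j = X j := fun j hj => Function.update_of_ne hj _ _
  have hgi : g i = p := Function.update_self _ _ _
  have hgj : ∀ j, j ≠ i → g j = X j := fun j hj => Function.update_of_ne hj _ _
  have hs : ∀ h : Fin 3 → MvPolynomial (Fin 3) ℂ, (∀ j, j ≠ i → h j = X j) →
      aeval h s = s := by
    intro h hh
    rw [hsdef, map_sum]
    refine Finset.sum_congr rfl ?_
    intro j hj
    rw [map_mul, aeval_C, aeval_X, algebraMap_eq, hh j (Finset.mem_erase.1 hj).1]
  have hCC : C (cf i) * (C (cf i)⁻¹ * (X i - s)) = X i - s := by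
    rw [← mul_assoc, ← C_mul, mul_inv_cancel₀ hci, C_1, one_mul]
  have haefp : aeval f p = X i := by
    rw [hps, map_add, map_mul, aeval_C, aeval_X, algebraMap_eq, hfi, hs f hfj, hCC,
      sub_add_cancel]
  have h₁ : (aeval f).comp (aeval g) = AlgHom.id ℂ (MvPolynomial (Fin 3) ℂ) := by
    apply algHom_ext
    intro j
    simp only [AlgHom.comp_apply, aeval_X, AlgHom.id_apply]
    by_cases hji : j = i
    · rw [hji, hgi, haefp]
    · rw [hgj j hji, aeval_X, hfj j hji]
  have h₂ : (aeval g).comp (aeval f) = AlgHom.id ℂ (MvPolynomial (Fin 3) ℂ) := by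
    apply algHom_ext
    intro j
    simp only [AlgHom.comp_apply, aeval_X, AlgHom.id_apply]
    by_cases hji : j = i
    · rw [hji, hfi, map_mul, map_sub, aeval_C, aeval_X, algebraMap_eq, hgi, hs g hgj]
      have hdiff : p - s = C (cf i) * X i := by rw [hps]; ring
      rw [hdiff, ← mul_assoc, ← C_mul, inv_mul_cancel₀ hci, C_1, one_mul]
    · rw [hfj j hji, aeval_X, hgj j hji]
  let E : MvPolynomial (Fin 3) ℂ ≃ₐ[ℂ] MvPolynomial (Fin 3) ℂ :=
    AlgEquiv.ofAlgHom (aeval f) (aeval g) h₁ h₂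
  rw [← MulEquiv.prime_iff E.toMulEquiv]
  have hEp : E.toMulEquiv p = X i := haefp
  rw [hEp]
  exact aux_prime_X i

/-- If `a, b, c, d` are homogeneous polynomials in `ℂ[x₀,x₁,x₂]` of degrees `1, 2, 3, 2`
respectively, with `a ≠ 0` and `c ≠ 0`, satisfying `a·c = b² − d²`, then `c` is divisible
by a nonzero homogeneous polynomial of degree `1` (so `c` is not irreducible). -/
theorem cubic_has_linear_factor
    (a b c d : MvPolynomial (Fin 3) ℂ)
    (ha : a.IsHomogeneous 1) (hb : b.IsHomogeneous 2)
    (hc : c.IsHomogeneous 3) (hd : d.IsHomogeneous 2)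
    (ha0 : a ≠ 0) (hc0 : c ≠ 0)
    (heq : a * c = b ^ 2 - d ^ 2) :
    ¬ Irreducible c ∧
      ∃ l : MvPolynomial (Fin 3) ℂ, l ≠ 0 ∧ l.IsHomogeneous 1 ∧ l ∣ c := by
  have hbd : (b - d) * (b + d) = a * c := by rw [heq]; ring
  have hac0 : a * c ≠ 0 := mul_ne_zero ha0 hc0
  have hm0 : b - d ≠ 0 := fun h => hac0 (by rw [← hbd, h, zero_mul])
  have hp0 : b + d ≠ 0 := fun h => hac0 (by rw [← hbd, h, mul_zero])
  have hprime : Prime a := aux_lin_prime ha ha0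
  have hdvd : a ∣ (b - d) * (b + d) := ⟨c, hbd⟩
  have hkey : ∃ q e : MvPolynomial (Fin 3) ℂ, q ≠ 0 ∧ q.IsHomogeneous 1 ∧
      e.IsHomogeneous 2 ∧ c = q * e := by
    rcases hprime.2.2 _ _ hdvd with ⟨q, hq⟩ | ⟨q, hq⟩
    · refine ⟨q, b + d, fun h => hm0 (by rw [hq, h, mul_zero]), ?_, hb.add hd, ?_⟩
      · exact aux_quot_homog ha (by rw [← hq]; exact hb.sub hd) ha0
      · apply mul_left_cancel₀ ha0
        rw [← hbd, hq]; ring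
    · refine ⟨q, b - d, fun h => hp0 (by rw [hq, h, mul_zero]), ?_, hb.sub hd, ?_⟩
      · exact aux_quot_homog ha (by rw [← hq]; exact hb.add hd) ha0
      · apply mul_left_cancel₀ ha0
        rw [← hbd, hq]; ring
  obtain ⟨q, e, hq0, hqh, heh, hceq⟩ := hkey
  refine ⟨?_, q, hq0, hqh, e, hceq⟩
  intro hirr
  rcases hirr.isUnit_or_isUnit hceq with h | h
  · exact aux_not_unit hqh one_ne_zero h
  · exact aux_not_unit heh two_ne_zero h
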